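/- Let $f_n, f : E \to \mathbb{R}$ be continuous functions on a compact set $E \subset \mathbb{R}^d$ with $f_n \to f$ uniformly, and suppose the set $\{t \in E : f(t) = 0\}$ has Lebesgue measure zero. Then $\int_E \mathbf{1}(f_n(t) > 0)\,dt \to \int_E \mathbf{1}(f(t) > 0)\,dt$ as $n \to \infty$. -/

import Mathlib

open MeasureTheory Filter Set

theorem stmt_1 {d : ℕ} (E : Set (Fin d → ℝ)) (hE : IsCompact E)
    (f : (Fin d → ℝ) → ℝ) (fn : ℕ → (Fin d → ℝ) → ℝ)
    (hf : ContinuousOn f E) (hfn : ∀ n, ContinuousOn (fn n) E)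
    (hconv : TendstoUniformlyOn fn f atTop E)
    (hnull : volume {t ∈ E | f t = 0} = 0) :
    Tendsto (fun n => ∫ t in E, Set.indicator {t | 0 < fn n t} (fun _ => (1:ℝ)) t)
      atTop (nhds (∫ t in E, Set.indicator {t | 0 < f t} (fun _ => (1:ℝ)) t)) := by
  have hEm : MeasurableSet E := hE.isClosed.measurableSet
  have key : ∀ g : (Fin d → ℝ) → ℝ, ContinuousOn g E →
      AEStronglyMeasurable (Set.indicator {t | 0 < g t} (fun _ => (1:ℝ)))
        (volume.restrict E) := by
    intro g hg
    have hga : AEMeasurable g (volume.restrict E) := hg.aemeasurable hEm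
    have : Set.indicator {t | 0 < g t} (fun _ => (1:ℝ))
        = (Set.indicator (Set.Ioi (0:ℝ)) (fun _ => (1:ℝ))) ∘ g := by
      funext t
      by_cases h : 0 < g t <;>
        simp [Set.indicator, h, Set.mem_Ioi]
    rw [this]
    exact ((measurable_const.indicator measurableSet_Ioi).comp_aemeasurable
      hga).aestronglyMeasurable
  apply tendsto_integral_of_dominated_convergence (fun _ => (1:ℝ))
  · exact fun n => key _ (hfn n)
  · exact integrableOn_const hE.measure_lt_top.ne
  · intro n
    filter_upwards with t
    by_cases h : 0 < fn n t <;> simp [Set.indicator, h]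
  · have h1 : ∀ᵐ t ∂volume.restrict E, t ∈ E := ae_restrict_mem hEm
    have h2 : ∀ᵐ t ∂volume.restrict E, t ∉ {t | t ∈ E ∧ f t = 0} :=
      ae_restrict_of_ae (measure_eq_zero_iff_ae_notMem.1 hnull)
    filter_upwards [h1, h2] with t htE hne
    have hfne : f t ≠ 0 := fun h => hne ⟨htE, h⟩
    have hptw : Tendsto (fun n => fn n t) atTop (nhds (f t)) :=
      hconv.tendsto_at htE
    rcases lt_or_gt_of_ne hfne with hlt | hgt
    · have hev : ∀ᶠ n in atTop, fn n t < 0 :=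
        hptw.eventually (eventually_lt_nhds hlt)
      have : (fun n => Set.indicator {t | 0 < fn n t} (fun _ => (1:ℝ)) t)
          =ᶠ[atTop] fun _ => 0 := by
        filter_upwards [hev] with n hn
        simp [Set.indicator, not_lt.2 hn.le, asymm hn]
      refine Tendsto.congr' this.symm ?_
      have h0 : Set.indicator {t | 0 < f t} (fun _ => (1:ℝ)) t = 0 := by
        simp [Set.indicator, asymm hlt]
      rw [h0]
      exact tendsto_const_nhds
    · have hev : ∀ᶠ n in atTop, 0 < fn n t :=
        hptw.eventually (eventually_gt_nhds hgt)
      have hcong : (fun n => Set.indicator {t | 0 < fn n t} (fun _ => (1:ℝ)) t)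
          =ᶠ[atTop] fun _ => 1 := by
        filter_upwards [hev] with n hn
        simp [Set.indicator, hn]
      have : Set.indicator {t | 0 < f t} (fun _ => (1:ℝ)) t = 1 := by
        simp [Set.indicator, hgt]
      rw [this]
      exact Tendsto.congr' hcong.symm tendsto_const_nhds
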